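/- Let q : (0,1) → ℝ be a nonnegative integrable function that is symmetric (q(x) = q(1-x) for all x ∈ (0,1)), convex on (0, 1/2], satisfies q(x) → 0 as x → 0⁺, and ∫₀¹ q(x) dx = 1. Let p : (0,1) → ℝ be a nonnegative integrable function that is symmetric and non-decreasing on (0, 1/2]. Then, with q₀(x) = 4·min{x, 1-x}, one has ∫₀¹ p(x)·q₀(x) dx ≤ ∫₀¹ p(x)·q(x) dx; that is, q₀ provides the best (smallest) bound among all admissible q in the generalized Clausing inequality. -/

import Mathlib

open MeasureTheory Set Filter

lemma slope_aux{q : ℝ → ℝ} (hconv : ConvexOn ℝ (Ioc 0 (1/2:ℝ)) q)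
    (hlim : Tendsto q (nhdsWithin 0 (Ioi 0)) (nhds 0))
    {x y : ℝ} (hx : 0 < x) (hxy : x < y) (hy : y ≤ 1/2) :
    q x ≤ (x / y) * q y := by
  have h0y : 0 < y := hx.trans hxy
  have key : ∀ t ∈ Ioo (0:ℝ) x, q x ≤ ((y-x)/(y-t)) * q t + ((x-t)/(y-t)) * q y := by
    intro t ht
    have h1 : 0 < y - t := by linarith [ht.2]
    have ha : (0:ℝ) ≤ (y-x)/(y-t) := by
      apply div_nonneg <;> linarith
    have hb : (0:ℝ) ≤ (x-t)/(y-t) := by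
      apply div_nonneg <;> linarith [ht.2]
    have hab : (y-x)/(y-t) + (x-t)/(y-t) = 1 := by field_simp; ring
    have h2 := hconv.2 (show t ∈ Ioc (0:ℝ) (1/2) from ⟨ht.1, by linarith [ht.2]⟩)
      (show y ∈ Ioc (0:ℝ) (1/2) from ⟨h0y, hy⟩) ha hb hab
    simp only [smul_eq_mul] at h2
    have hxe : ((y-x)/(y-t)) * t + ((x-t)/(y-t)) * y = x := by
      rw [div_mul_eq_mul_div, div_mul_eq_mul_div, ← add_div,
        show (y-x)*t + (x-t)*y = x*(y-t) by ring]
      exact mul_div_cancel_right₀ x h1.ne'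
    rwa [hxe] at h2
  have hden : Tendsto (fun t : ℝ => y - t) (nhds 0) (nhds y) := by
    have : Continuous (fun t : ℝ => y - t) := continuous_const.sub continuous_id
    simpa using this.tendsto (0:ℝ)
  have hnum : Tendsto (fun t : ℝ => x - t) (nhds 0) (nhds x) := by
    have : Continuous (fun t : ℝ => x - t) := continuous_const.sub continuous_id
    simpa using this.tendsto (0:ℝ)
  have hF : Tendsto (fun t => ((y-x)/(y-t)) * q t + ((x-t)/(y-t)) * q y)
      (nhdsWithin 0 (Ioi 0)) (nhds ((x/y) * q y)) := by
    have h1 : Tendsto (fun t : ℝ => (y-x)/(y-t)) (nhdsWithin 0 (Ioi 0)) (nhds ((y-x)/y)) :=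
      (tendsto_const_nhds.div hden h0y.ne').mono_left nhdsWithin_le_nhds
    have h2 : Tendsto (fun t : ℝ => ((x-t)/(y-t)) * q y) (nhdsWithin 0 (Ioi 0))
        (nhds ((x/y) * q y)) :=
      (((hnum.div hden h0y.ne').mul tendsto_const_nhds)).mono_left nhdsWithin_le_nhds
    have := (h1.mul hlim).add h2
    simpa using this
  refine ge_of_tendsto hF ?_
  filter_upwards [Ioo_mem_nhdsGT_of_mem (by constructor <;> simp [hx] : (0:ℝ) ∈ Ico 0 x)]
    with t ht using key t ht

lemma sym_reduce{f : ℝ → ℝ} (hf : IntegrableOn f (Ioo 0 1))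
    (hsym : ∀ x ∈ Ioo (0:ℝ) 1, f x = f (1-x)) :
    ∫ x in Ioo (0:ℝ) 1, f x = 2 * ∫ x in Ioc (0:ℝ) (1/2), f x := by
  have hi1 : IntervalIntegrable f volume 0 (1/2) := by
    rw [intervalIntegrable_iff_integrableOn_Ioc_of_le (by norm_num)]
    exact hf.mono_set (fun x hx => ⟨hx.1, lt_of_le_of_lt hx.2 (by norm_num)⟩)
  have hi2 : IntervalIntegrable f volume (1/2) 1 := by
    rw [intervalIntegrable_iff_integrableOn_Ioo_of_le (by norm_num)]
    exact hf.mono_set (fun x hx => ⟨lt_trans (by norm_num) hx.1, hx.2⟩)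
  have h1 : ∫ x in Ioo (0:ℝ) 1, f x = ∫ x in (0:ℝ)..1, f x := by
    rw [intervalIntegral.integral_of_le (by norm_num), integral_Ioc_eq_integral_Ioo]
  have h2 : ∫ x in (0:ℝ)..1, f x = (∫ x in (0:ℝ)..(1/2), f x) + ∫ x in (1/2:ℝ)..1, f x :=
    (intervalIntegral.integral_add_adjacent_intervals hi1 hi2).symm
  have h3 : ∫ x in (1/2:ℝ)..1, f x = ∫ x in (0:ℝ)..(1/2), f (1 - x) := by
    have := intervalIntegral.integral_comp_sub_left (a := (0:ℝ)) (b := (1/2:ℝ)) f 1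
    rw [this]; norm_num
  have h4 : ∫ x in (0:ℝ)..(1/2), f (1 - x) = ∫ x in (0:ℝ)..(1/2), f x := by
    rw [intervalIntegral.integral_of_le (by norm_num),
      intervalIntegral.integral_of_le (by norm_num)]
    apply setIntegral_congr_fun measurableSet_Ioc
    intro x hx
    exact (hsym x ⟨hx.1, lt_of_le_of_lt hx.2 (by norm_num)⟩).symm
  have h5 : ∫ x in (0:ℝ)..(1/2), f x = ∫ x in Ioc (0:ℝ) (1/2), f x := by
    rw [intervalIntegral.integral_of_le (by norm_num)]
  rw [h1, h2, h3, h4, h5]; ring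

/-- **Optimality of `q₀(x) = 4 min{x, 1-x}`.** Let `q` be nonnegative, integrable,
symmetric on `(0,1)`, convex on `(0, 1/2]`, with `q(x) → 0` as `x → 0⁺` and
`∫₀¹ q = 1`, and let `p` be nonnegative, integrable, symmetric and non-decreasing on
`(0, 1/2]` (products assumed integrable). Then `∫₀¹ p q₀ ≤ ∫₀¹ p q`. -/
theorem clausing_q0_best (p q : ℝ → ℝ)
    (hq_nonneg : ∀ x ∈ Ioo (0:ℝ) 1, 0 ≤ q x)
    (hq_int : IntegrableOn q (Ioo 0 1))
    (hq_symm : ∀ x ∈ Ioo (0:ℝ) 1, q x = q (1 - x))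
    (hq_conv : ConvexOn ℝ (Ioc 0 (1/2)) q)
    (hq_lim : Tendsto q (nhdsWithin 0 (Ioi 0)) (nhds 0))
    (hq_one : ∫ x in Ioo (0:ℝ) 1, q x = 1)
    (hp_nonneg : ∀ x ∈ Ioo (0:ℝ) 1, 0 ≤ p x)
    (hp_int : IntegrableOn p (Ioo 0 1))
    (hp_symm : ∀ x ∈ Ioo (0:ℝ) 1, p x = p (1 - x))
    (hp_mono : MonotoneOn p (Ioc 0 (1/2)))
    (hpq_int : IntegrableOn (fun x => p x * q x) (Ioo 0 1))
    (hpq0_int : IntegrableOn (fun x => p x * (4 * min x (1 - x))) (Ioo 0 1)) :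
    ∫ x in Ioo (0:ℝ) 1, p x * (4 * min x (1 - x)) ≤
      ∫ x in Ioo (0:ℝ) 1, p x * q x := by
  have hsub : Ioc (0:ℝ) (1/2) ⊆ Ioo 0 1 :=
    fun x hx => ⟨hx.1, lt_of_le_of_lt hx.2 (by norm_num)⟩
  -- existence of the splitting level M
  obtain ⟨M, hM⟩ : ∃ M, ∀ x ∈ Ioc (0:ℝ) (1/2), 0 ≤ (p x - M) * (q x - 4*x) := by
    set S := {x ∈ Ioc (0:ℝ) (1/2) | q x ≤ 4*x} with hS
    by_cases hne : S.Nonempty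
    · have hbdd : BddAbove S := ⟨1/2, fun x hx => hx.1.2⟩
      set c := sSup S with hc
      obtain ⟨x0, hx0⟩ := id hne
      have hc_pos : 0 < c := lt_of_lt_of_le hx0.1.1 (le_csSup hbdd hx0)
      have hc_le : c ≤ 1/2 := csSup_le hne (fun x hx => hx.1.2)
      have hc_mem : c ∈ Ioc (0:ℝ) (1/2) := ⟨hc_pos, hc_le⟩
      refine ⟨p c, fun x hx => ?_⟩
      rcases lt_trichotomy x c with h | h | h
      · -- q x ≤ 4x and p x ≤ p c
        obtain ⟨y, hyS, hxy⟩ := exists_lt_of_lt_csSup hne h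
        have hq4 : q x ≤ 4*x := by
          have h1 := slope_aux hq_conv hq_lim hx.1 hxy hyS.1.2
          have h2 : (x/y) * q y ≤ (x/y) * (4*y) :=
            mul_le_mul_of_nonneg_left hyS.2
              (div_nonneg hx.1.le (hx.1.trans hxy).le)
          have hy0 : y ≠ 0 := (hx.1.trans hxy).ne'
          have h3 : (x/y) * (4*y) = 4*x := by
            field_simp
          linarith
        have hp : p x ≤ p c := hp_mono hx hc_mem h.le
        nlinarith
      · simp [h]
      · have hxS : x ∉ S := fun hxS => absurd (le_csSup hbdd hxS) (not_le.mpr h)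
        have hq4 : 4*x < q x := by
          by_contra hcon
          exact hxS ⟨hx, not_lt.mp hcon⟩
        have hp : p c ≤ p x := hp_mono hc_mem hx h.le
        exact mul_nonneg (by linarith) (by linarith)
    · refine ⟨0, fun x hx => ?_⟩
      have hq4 : 4*x < q x := by
        by_contra hcon
        exact hne ⟨x, hx, not_lt.mp hcon⟩
      have hp : 0 ≤ p x := hp_nonneg x (hsub hx)
      exact mul_nonneg (by linarith) (by linarith)
  -- integrability facts on (0, 1/2]
  have hA : IntegrableOn (fun x => p x * q x) (Ioc 0 (1/2)) := hpq_int.mono_set hsub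
  have hB : IntegrableOn p (Ioc 0 (1/2)) := hp_int.mono_set hsub
  have hC : IntegrableOn q (Ioc 0 (1/2)) := hq_int.mono_set hsub
  have hid : IntegrableOn (fun x : ℝ => x) (Ioc 0 (1/2)) := by
    have := intervalIntegral.intervalIntegrable_id (μ := volume) (a := (0:ℝ)) (b := (1/2:ℝ))
    rwa [intervalIntegrable_iff_integrableOn_Ioc_of_le (by norm_num)] at this
  have hXp : IntegrableOn (fun x : ℝ => x * p x) (Ioc 0 (1/2)) := by
    refine hB.bdd_mul (c := 1/2) aestronglyMeasurable_id ?_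
    refine (ae_restrict_iff' measurableSet_Ioc).mpr (Eventually.of_forall fun x hx => ?_)
    rw [Real.norm_eq_abs, abs_of_pos hx.1]
    exact hx.2
  have hP4x : IntegrableOn (fun x : ℝ => p x * (4*x)) (Ioc 0 (1/2)) := by
    refine (hXp.const_mul 4).congr (Eventually.of_forall fun x => ?_)
    ring
  have hG : IntegrableOn (fun x : ℝ => q x - 4*x) (Ioc 0 (1/2)) :=
    hC.sub (hid.const_mul 4)
  have hF : IntegrableOn (fun x : ℝ => (p x - M) * (q x - 4*x)) (Ioc 0 (1/2)) := by
    refine (((hA.sub (hXp.const_mul 4)).sub (hC.const_mul M)).add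
      (hid.const_mul (4*M))).congr (Eventually.of_forall fun x => ?_)
    simp only [Pi.add_apply, Pi.sub_apply]
    ring
  -- ∫ q over (0,1/2] is 1/2
  have hq_half : ∫ x in Ioc (0:ℝ) (1/2), q x = 1/2 := by
    have := sym_reduce hq_int hq_symm
    rw [hq_one] at this
    linarith
  have h4x_half : ∫ x in Ioc (0:ℝ) (1/2), 4*x = 1/2 := by
    rw [← intervalIntegral.integral_of_le (by norm_num : (0:ℝ) ≤ 1/2)]
    rw [intervalIntegral.integral_const_mul, integral_id]
    norm_num
  have hIg : ∫ x in Ioc (0:ℝ) (1/2), (q x - 4*x) = 0 := by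
    rw [integral_sub hC (hid.const_mul 4)]
    rw [hq_half]
    have : ∫ x in Ioc (0:ℝ) (1/2), (fun x : ℝ => 4*x) x = 1/2 := h4x_half
    simp only [this]
    norm_num
  -- nonnegativity of ∫ F
  have hFpos : 0 ≤ ∫ x in Ioc (0:ℝ) (1/2), (p x - M) * (q x - 4*x) :=
    setIntegral_nonneg measurableSet_Ioc hM
  -- reduce both sides by symmetry
  have hsym1 : ∀ x ∈ Ioo (0:ℝ) 1, p x * (4 * min x (1-x)) = p (1-x) * (4 * min (1-x) (1-(1-x))) := by
    intro x hx
    rw [← hp_symm x hx, show (1:ℝ)-(1-x) = x by ring, min_comm]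
  have hsym2 : ∀ x ∈ Ioo (0:ℝ) 1, p x * q x = p (1-x) * q (1-x) := by
    intro x hx
    rw [← hp_symm x hx, ← hq_symm x hx]
  have hL : ∫ x in Ioo (0:ℝ) 1, p x * (4 * min x (1 - x))
      = 2 * ∫ x in Ioc (0:ℝ) (1/2), p x * (4*x) := by
    rw [sym_reduce hpq0_int hsym1]
    congr 1
    refine setIntegral_congr_fun measurableSet_Ioc fun x hx => ?_
    rw [min_eq_left (by linarith [hx.2] : x ≤ 1 - x)]
  have hR : ∫ x in Ioo (0:ℝ) 1, p x * q x = 2 * ∫ x in Ioc (0:ℝ) (1/2), p x * q x :=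
    sym_reduce hpq_int hsym2
  rw [hL, hR]
  have key : ∫ x in Ioc (0:ℝ) (1/2), p x * (4*x) ≤ ∫ x in Ioc (0:ℝ) (1/2), p x * q x := by
    have hdiff : ∫ x in Ioc (0:ℝ) (1/2), (p x * q x - p x * (4*x))
        = (∫ x in Ioc (0:ℝ) (1/2), (p x - M) * (q x - 4*x))
          + M * ∫ x in Ioc (0:ℝ) (1/2), (q x - 4*x) := by
      rw [← integral_const_mul, ← integral_add hF (hG.const_mul M)]
      refine setIntegral_congr_fun measurableSet_Ioc fun x _ => ?_
      ring
    rw [integral_sub hA hP4x] at hdiff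
    rw [hIg] at hdiff
    linarith
  linarith
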